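/- Combined Löwenheim–Skolem for many-sorted logic: Let Σ be a many-sorted signature, 𝔸 a Σ-structure, and κ a cardinal with κ ≥ max(|Σ|, ℵ₀). Then there is a Σ-structure 𝔹 elementarily equivalent to 𝔸 such that |σ^𝔹| = κ for every sort σ with σ^𝔸 infinite and σ^𝔹 = σ^𝔸 for every sort σ with σ^𝔸 finite. -/

import Mathlib

set_option autoImplicit false

/-- A many-sorted first-order signature. -/
structure MSSignature : Type 1 where
  Sorts : Type
  Func : Type
  Pred : Type
  funcDom : Func → List Sorts
  funcCod : Func → Sorts
  predDom : Pred → List Sorts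

namespace MS

variable (Sg : MSSignature)

/-- Many-sorted terms; variables of each sort are indexed by naturals. -/
inductive Term : Sg.Sorts → Type where
  | var (s : Sg.Sorts) (n : ℕ) : Term s
  | app (f : Sg.Func)
      (args : ∀ i : Fin (Sg.funcDom f).length, Term ((Sg.funcDom f).get i)) :
      Term (Sg.funcCod f)

/-- Many-sorted first-order formulas. -/
inductive Formula : Type where
  | eq {s : Sg.Sorts} (t u : Term Sg s) : Formula
  | pred (P : Sg.Pred)
      (args : ∀ i : Fin (Sg.predDom P).length, Term Sg ((Sg.predDom P).get i)) : Formula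
  | falsum : Formula
  | imp (φ ψ : Formula) : Formula
  | all (s : Sg.Sorts) (n : ℕ) (φ : Formula) : Formula

/-- A structure for a many-sorted signature: each sort gets a nonempty domain. -/
structure Structure : Type 1 where
  dom : Sg.Sorts → Type
  dom_nonempty : ∀ s, Nonempty (dom s)
  interpFunc : ∀ f : Sg.Func,
    (∀ i : Fin (Sg.funcDom f).length, dom ((Sg.funcDom f).get i)) → dom (Sg.funcCod f)
  interpPred : ∀ P : Sg.Pred,
    (∀ i : Fin (Sg.predDom P).length, dom ((Sg.predDom P).get i)) → Prop

variable {Sg}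

/-- Variable assignments. -/
def Assign (A : Structure Sg) : Type := ∀ s : Sg.Sorts, ℕ → A.dom s

open Classical in
noncomputable
def Assign.update {A : Structure Sg} (ν : Assign A) (s : Sg.Sorts) (n : ℕ) (a : A.dom s) :
    Assign A := fun t m =>
  if h : s = t then (if m = n then h ▸ a else ν t m) else ν t m

def Term.eval {A : Structure Sg} (ν : Assign A) : ∀ {s : Sg.Sorts}, Term Sg s → A.dom s
  | _, .var s n => ν s n
  | _, .app f args => A.interpFunc f fun i => Term.eval ν (args i)

/-- Tarskian satisfaction. -/
def Sat (A : Structure Sg) (ν : Assign A) : Formula Sg → Prop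
  | .eq t u => t.eval ν = u.eval ν
  | .pred P args => A.interpPred P fun i => (args i).eval ν
  | .falsum => False
  | .imp φ ψ => Sat A ν φ → Sat A ν ψ
  | .all s n φ => ∀ a : A.dom s, Sat A (ν.update s n a) φ

/-- Derived connectives. -/
def Formula.not (φ : Formula Sg) : Formula Sg := .imp φ .falsum
def Formula.and (φ ψ : Formula Sg) : Formula Sg := (Formula.imp φ ψ.not).not
def Formula.or (φ ψ : Formula Sg) : Formula Sg := .imp φ.not ψ
def Formula.ex (s : Sg.Sorts) (n : ℕ) (φ : Formula Sg) : Formula Sg :=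
  ((Formula.all s n φ.not)).not
def Formula.andList : List (Formula Sg) → Formula Sg :=
  List.foldr Formula.and (Formula.not .falsum)
def Formula.orList : List (Formula Sg) → Formula Sg :=
  List.foldr Formula.or .falsum

/-- Occurrence of variable `(s, n)` in a term. -/
def Term.varOccurs (s : Sg.Sorts) (n : ℕ) : ∀ {t : Sg.Sorts}, Term Sg t → Prop
  | _, .var s' n' => s = s' ∧ n = n'
  | _, .app _ args => ∃ i, Term.varOccurs s n (args i)

/-- Free occurrence of variable `(s, n)` in a formula. -/
def Formula.varFree (s : Sg.Sorts) (n : ℕ) : Formula Sg → Prop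
  | .eq t u => t.varOccurs s n ∨ u.varOccurs s n
  | .pred _ args => ∃ i, (args i).varOccurs s n
  | .falsum => False
  | .imp φ ψ => φ.varFree s n ∨ ψ.varFree s n
  | .all s' n' φ => φ.varFree s n ∧ ¬(s = s' ∧ n = n')

def Formula.IsSentence (φ : Formula Sg) : Prop := ∀ s n, ¬ φ.varFree s n

/-- Quantifier-free formulas. -/
def Formula.IsQF : Formula Sg → Prop
  | .eq _ _ => True
  | .pred _ _ => True
  | .falsum => True
  | .imp φ ψ => φ.IsQF ∧ ψ.IsQF
  | .all _ _ _ => False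

/-- A structure is a model of a set of formulas (a theory) if it satisfies
every axiom under every assignment. -/
def Models (A : Structure Sg) (T : Set (Formula Sg)) : Prop :=
  ∀ φ ∈ T, ∀ ν : Assign A, Sat A ν φ

/-- Elementary equivalence: same sentences hold. -/
def ElemEquiv (A B : Structure Sg) : Prop :=
  ∀ φ : Formula Sg, φ.IsSentence →
    ((∀ ν : Assign A, Sat A ν φ) ↔ (∀ ν : Assign B, Sat B ν φ))

/-- Substructures: sort-wise subsets closed under the functions. -/
structure Substructure (A : Structure Sg) : Type 1 where
  carrier : ∀ s : Sg.Sorts, Set (A.dom s)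
  carrier_nonempty : ∀ s, (carrier s).Nonempty
  closed : ∀ (f : Sg.Func)
    (args : ∀ i : Fin (Sg.funcDom f).length, A.dom ((Sg.funcDom f).get i)),
    (∀ i, args i ∈ carrier _) → A.interpFunc f args ∈ carrier _

/-- The induced structure on a substructure. -/
def Substructure.toStructure {A : Structure Sg} (B : Substructure A) : Structure Sg where
  dom s := ↥(B.carrier s)
  dom_nonempty s := ⟨⟨(B.carrier_nonempty s).choose, (B.carrier_nonempty s).choose_spec⟩⟩
  interpFunc f args :=
    ⟨A.interpFunc f fun i => (args i).1, B.closed f _ fun i => (args i).2⟩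
  interpPred P args := A.interpPred P fun i => (args i).1

/-- View an assignment into a substructure as an assignment into the ambient structure. -/
def Substructure.amb {A : Structure Sg} (B : Substructure A)
    (ν : Assign B.toStructure) : Assign A := fun s n => (ν s n).1

/-- `B` is an elementary substructure of `A`. -/
def Substructure.IsElementary {A : Structure Sg} (B : Substructure A) : Prop :=
  ∀ (φ : Formula Sg) (ν : Assign B.toStructure),
    Sat B.toStructure ν φ ↔ Sat A (B.amb ν) φ

/-- Isomorphisms of structures. -/
structure Iso (A B : Structure Sg) : Type 1 where
  toEquiv : ∀ s, A.dom s ≃ B.dom s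
  map_func : ∀ (f : Sg.Func) args,
    toEquiv _ (A.interpFunc f args) = B.interpFunc f (fun i => toEquiv _ (args i))
  map_pred : ∀ (P : Sg.Pred) args,
    A.interpPred P args ↔ B.interpPred P (fun i => toEquiv _ (args i))

end MS

/-- The cardinality of a signature: sorts + function symbols + predicate symbols. -/
noncomputable def MSSignature.card (Sg : MSSignature) : Cardinal :=
  Cardinal.mk Sg.Sorts + Cardinal.mk Sg.Func + Cardinal.mk Sg.Pred

/-- A countable signature. -/
def MSSignature.IsCountable (Sg : MSSignature) : Prop :=
  Countable Sg.Sorts ∧ Countable Sg.Func ∧ Countable Sg.Pred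

open MS Cardinal
section MSLS

namespace MSLS

open FirstOrder FirstOrder.Language MS Cardinal

variable {Sg : MSSignature}

/-- Relabelled universal closure over a finite type `γ` (old Mathlib API). -/
noncomputable def oIAlls {L : FirstOrder.Language} {α β : Type} {γ : Type} [Finite γ]
    (f : α → β ⊕ γ) (φ : L.Formula α) : L.Formula β :=
  Formula.iAlls γ (φ.relabel f)

/-- Relabelled existential closure over a finite type `γ` (old Mathlib API). -/
noncomputable def oIExs {L : FirstOrder.Language} {α β : Type} {γ : Type} [Finite γ]
    (f : α → β ⊕ γ) (φ : L.Formula α) : L.Formula β :=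
  Formula.iExs γ (φ.relabel f)

/-- Conjunction over a finset (old Mathlib API). -/
noncomputable def oIInf {L : FirstOrder.Language} {α β : Type} {n : ℕ} (s : Finset β)
    (f : β → L.BoundedFormula α n) : L.BoundedFormula α n :=
  (s.toList.map f).foldr (· ⊓ ·) ⊤

theorem realize_oIAlls {L : FirstOrder.Language} {M : Type} [L.Structure M] {α β : Type}
    {γ : Type} [Finite γ] (f : α → β ⊕ γ) (φ : L.Formula α) (v : β → M) :
    (oIAlls f φ).Realize v ↔ ∀ i : γ → M, φ.Realize (fun a => Sum.elim v i (f a)) := by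
  rw [oIAlls, Formula.realize_iAlls]
  exact forall_congr' fun i => Formula.realize_relabel

theorem realize_oIExs {L : FirstOrder.Language} {M : Type} [L.Structure M] {α β : Type}
    {γ : Type} [Finite γ] (f : α → β ⊕ γ) (φ : L.Formula α) (v : β → M) :
    (oIExs f φ).Realize v ↔ ∃ i : γ → M, φ.Realize (fun a => Sum.elim v i (f a)) := by
  rw [oIExs, Formula.realize_iExs]
  exact exists_congr fun i => Formula.realize_relabel

/-- The one-sorted language associated to a many-sorted signature. -/
def Lg (Sg : MSSignature) : FirstOrder.Language where
  Functions n := {f : Sg.Func // (Sg.funcDom f).length = n}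
  Relations n := {P : Sg.Pred // (Sg.predDom P).length = n} ⊕ Sg.Sorts

/-- Variable index type. -/
abbrev V (Sg : MSSignature) : Type := (s : Sg.Sorts) × ℕ

def funcSym (f : Sg.Func) : (Lg Sg).Functions (Sg.funcDom f).length := ⟨f, rfl⟩
def predSym (P : Sg.Pred) : (Lg Sg).Relations (Sg.predDom P).length := Sum.inl ⟨P, rfl⟩
def sortSym (s : Sg.Sorts) : (Lg Sg).Relations 1 := Sum.inr s

noncomputable instance : DecidableEq (V Sg) := Classical.decEq _

variable (N : Type) [(Lg Sg).Structure N]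

/-- Membership in the sort predicate. -/
def InSort (s : Sg.Sorts) (x : N) : Prop := Structure.RelMap (sortSym s) ![x]

variable {N}

/-- translation of terms -/
noncomputable def trTerm : ∀ {s : Sg.Sorts}, MS.Term Sg s → (Lg Sg).Term (V Sg)
  | _, .var s n => .var ⟨s, n⟩
  | _, .app f args => FirstOrder.Language.Term.func (funcSym f) fun i => trTerm (args i)

noncomputable def sortF {α : Type} (s : Sg.Sorts) (t : (Lg Sg).Term α) : (Lg Sg).Formula α :=
  Relations.formula (sortSym s) ![t]

/-- translation of formulas -/
noncomputable def trFormula : MS.Formula Sg → (Lg Sg).Formula (V Sg)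
  | .eq t u => Term.equal (trTerm t) (trTerm u)
  | .pred P args => Relations.formula (predSym P) fun i => trTerm (args i)
  | .falsum => ⊥
  | .imp φ ψ => (trFormula φ).imp (trFormula ψ)
  | .all s n φ =>
      oIAlls (γ := Unit) (fun v : V Sg => if v = ⟨s, n⟩ then .inr () else .inl v)
        ((sortF s (.var ⟨s, n⟩)).imp (trFormula φ))

/-- A representation of an MS-structure inside a one-sorted structure. -/
structure Rep (C : MS.Structure Sg) (N : Type) [(Lg Sg).Structure N] where
  e : ∀ s, C.dom s → N
  inj : ∀ s, Function.Injective (e s)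
  mem : ∀ s a, InSort N s (e s a)
  surj : ∀ (s : Sg.Sorts) (x : N), InSort N s x → ∃ a, e s a = x
  mapFun : ∀ (f : Sg.Func) (args : ∀ i : Fin (Sg.funcDom f).length,
      C.dom ((Sg.funcDom f).get i)),
      e _ (C.interpFunc f args) = Structure.funMap (funcSym f) (fun i => e _ (args i))
  mapPred : ∀ (P : Sg.Pred) (args : ∀ i : Fin (Sg.predDom P).length,
      C.dom ((Sg.predDom P).get i)),
      C.interpPred P args ↔ Structure.RelMap (predSym P) (fun i => e _ (args i))

variable {C : MS.Structure Sg} (R : Rep C N)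

/-- The induced one-sorted variable assignment. -/
def Rep.asgn (ν : MS.Assign C) : V Sg → N := fun v => R.e v.1 (ν v.1 v.2)

theorem realize_trTerm (ν : MS.Assign C) : ∀ {s : Sg.Sorts} (t : MS.Term Sg s),
    (trTerm t).realize (R.asgn ν) = R.e s (t.eval ν)
  | _, .var s n => rfl
  | _, .app f args => by
      simp only [trTerm, Term.realize_func, MS.Term.eval, R.mapFun]
      congr 1
      funext i
      exact realize_trTerm ν (args i)

theorem asgn_update (ν : MS.Assign C) (s : Sg.Sorts) (n : ℕ) (a : C.dom s) :
    R.asgn (ν.update s n a) =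
      fun v : V Sg => if v = ⟨s, n⟩ then R.e s a else R.asgn ν v := by
  funext ⟨s', m⟩
  by_cases hv : (⟨s', m⟩ : V Sg) = ⟨s, n⟩
  · rw [if_pos hv]
    obtain ⟨hs, hm⟩ := Sigma.mk.inj_iff.1 hv
    rw [heq_iff_eq] at hm
    subst hs
    subst hm
    show R.e _ (MS.Assign.update ν _ _ a _ _) = R.e _ a
    unfold MS.Assign.update
    rw [dif_pos rfl, if_pos rfl]
  · rw [if_neg hv]
    show R.e s' (MS.Assign.update ν s n a s' m) = R.e s' (ν s' m)
    unfold MS.Assign.update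
    by_cases hss : s = s'
    · subst hss
      have hm : m ≠ n := by
        intro h; exact hv (by subst h; rfl)
      rw [dif_pos rfl, if_neg hm]
    · rw [dif_neg hss]

theorem asgn_elim (ν : MS.Assign C) (s : Sg.Sorts) (n : ℕ) (x : N) :
    (fun v : V Sg => Sum.elim (R.asgn ν) (fun _ : Unit => x)
      (if v = ⟨s, n⟩ then .inr () else .inl v)) =
      fun v : V Sg => if v = ⟨s, n⟩ then x else R.asgn ν v := by
  funext v
  by_cases hv : v = ⟨s, n⟩ <;> simp [hv]

theorem realize_sortF {α : Type} {s : Sg.Sorts} {t : (Lg Sg).Term α} {v : α → N} :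
    (sortF s t).Realize v ↔ InSort N s (t.realize v) := by
  simp only [sortF, Formula.realize_rel]
  have : (fun i : Fin 1 => Term.realize v (![t] i)) = ![Term.realize v t] := by
    funext i
    rw [Subsingleton.elim i 0]
    rfl
  rw [this]
  exact Iff.rfl

theorem realize_trFormula (φ : MS.Formula Sg) :
    ∀ ν : MS.Assign C, ((trFormula φ).Realize (R.asgn ν) ↔ MS.Sat C ν φ) := by
  induction φ with
  | eq t u =>
    intro ν
    simp only [trFormula, Formula.realize_equal, realize_trTerm]
    exact ⟨fun h => R.inj _ h, fun h => by rw [h]⟩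
  | pred P args =>
    intro ν
    simp only [trFormula, Formula.realize_rel, realize_trTerm]
    exact (R.mapPred P _).symm
  | falsum => intro ν; simp [trFormula, MS.Sat]
  | imp φ ψ ihφ ihψ =>
    intro ν
    simp only [trFormula, Formula.realize_imp, MS.Sat]
    rw [ihφ ν, ihψ ν]
  | all s n φ ih =>
    intro ν
    show (oIAlls _ _).Realize (R.asgn ν) ↔ _
    rw [realize_oIAlls]
    constructor
    · intro h a
      have h' := h (fun _ => R.e s a)
      rw [Formula.realize_imp, asgn_elim R ν s n (R.e s a)] at h'
      have h2 := h' (by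
        rw [realize_sortF]
        show InSort N s (if (⟨s, n⟩ : V Sg) = ⟨s, n⟩ then R.e s a else _)
        rw [if_pos rfl]
        exact R.mem s a)
      rw [← asgn_update] at h2
      exact (ih _).1 h2
    · intro h i
      rw [Formula.realize_imp, asgn_elim R ν s n (i ())]
      intro hguard
      rw [realize_sortF] at hguard
      have hx : InSort N s (i ()) := by
        have : (if (⟨s, n⟩ : V Sg) = ⟨s, n⟩ then i () else R.asgn ν ⟨s, n⟩) = i () :=
          if_pos rfl
        rw [show Term.realize (fun v : V Sg => if v = ⟨s, n⟩ then i () else R.asgn ν v)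
          (Term.var ⟨s, n⟩) = (if (⟨s, n⟩ : V Sg) = ⟨s, n⟩ then i () else R.asgn ν ⟨s, n⟩)
          from rfl, this] at hguard
        exact hguard
      obtain ⟨a, ha⟩ := R.surj s (i ()) hx
      rw [← ha, ← asgn_update]
      exact (ih _).2 (h a)

section Clos

theorem frealize_iInf {α β : Type} (s : Finset β) (f : β → (Lg Sg).Formula α) (v : α → N) :
    Formula.Realize (oIInf s f) v ↔ ∀ b ∈ s, Formula.Realize (f b) v :=
  by
    rw [Formula.Realize, oIInf, BoundedFormula.realize_foldr_inf]
    simp [Formula.Realize]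

/-- The guarded universal closure of the translation of an MS-formula, as a sentence. -/
noncomputable def clos (φ : MS.Formula Sg) : (Lg Sg).Sentence :=
  haveI : Finite (↥((↑(trFormula φ).freeVarFinset : Set (V Sg)))) :=
    (Finset.finite_toSet _).to_subtype
  oIAlls (γ := ↥((↑(trFormula φ).freeVarFinset : Set (V Sg)))) Sum.inr
    ((oIInf (trFormula φ).freeVarFinset.attach
        (fun w => sortF w.1.1 (Term.var
          (⟨w.1, Finset.mem_coe.mpr w.2⟩ : ↥((↑(trFormula φ).freeVarFinset : Set (V Sg))))))).imp
      ((trFormula φ).restrictFreeVar (Set.inclusion (subset_refl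
        ((↑(trFormula φ).freeVarFinset : Set (V Sg)))))))

theorem models_clos_iff (R : Rep C N) (φ : MS.Formula Sg) :
    N ⊨ clos φ ↔ ∀ ν : MS.Assign C, MS.Sat C ν φ := by
  haveI : Finite (↥((↑(trFormula φ).freeVarFinset : Set (V Sg)))) :=
    (Finset.finite_toSet _).to_subtype
  have key : ∀ (xs : ↥((↑(trFormula φ).freeVarFinset : Set (V Sg))) → N) (v : V Sg → N),
      (∀ w, xs w = v w.1) →
      (Formula.Realize ((trFormula φ).restrictFreeVar (Set.inclusion (subset_refl
        ((↑(trFormula φ).freeVarFinset : Set (V Sg)))))) xs ↔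
        Formula.Realize (trFormula φ) v) := by
    intro xs v hxv
    have hxs : xs = v ∘ (fun w : ↥((↑(trFormula φ).freeVarFinset : Set (V Sg))) =>
        (w : V Sg)) := by
      funext w; exact hxv w
    rw [hxs]
    exact BoundedFormula.realize_restrictFreeVar' (subset_refl _)
  constructor
  · intro hN ν
    rw [Sentence.Realize, clos, realize_oIAlls] at hN
    have h1 := hN (fun w => R.asgn ν w.1)
    rw [show (fun a => Sum.elim (default : Empty → N) (fun w :
        ↥((↑(trFormula φ).freeVarFinset : Set (V Sg))) => R.asgn ν w.1) (Sum.inr a)) =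
      (fun w : ↥((↑(trFormula φ).freeVarFinset : Set (V Sg))) => R.asgn ν w.1) from rfl,
      Formula.realize_imp] at h1
    have h2 := h1 (by
      rw [frealize_iInf]
      intro w _
      rw [realize_sortF]
      exact R.mem _ _)
    rw [key (fun w => R.asgn ν w.1) (R.asgn ν) (fun w => rfl)] at h2
    exact (realize_trFormula R φ ν).1 h2
  · intro hsat
    rw [Sentence.Realize, clos, realize_oIAlls]
    intro xs
    rw [show (fun a => Sum.elim (default : Empty → N) xs (Sum.inr a)) = xs from rfl,
      Formula.realize_imp, frealize_iInf]
    intro hguard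
    have hmem : ∀ w : ↥((↑(trFormula φ).freeVarFinset : Set (V Sg))),
        InSort N w.1.1 (xs w) := by
      rintro ⟨u, hu⟩
      have := hguard ⟨u, Finset.mem_coe.1 hu⟩ (Finset.mem_attach _ _)
      rw [realize_sortF] at this
      exact this
    classical
    have hchoice : ∀ (s : Sg.Sorts) (n : ℕ) (h : (⟨s, n⟩ : V Sg) ∈ (trFormula φ).freeVarFinset),
        ∃ a : C.dom s, R.e s a = xs ⟨⟨s, n⟩, Finset.mem_coe.mpr h⟩ := by
      intro s n h
      exact R.surj s _ (hmem ⟨⟨s, n⟩, Finset.mem_coe.mpr h⟩)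
    set ν : MS.Assign C := fun s n =>
      if h : (⟨s, n⟩ : V Sg) ∈ (trFormula φ).freeVarFinset then (hchoice s n h).choose
      else Classical.choice (C.dom_nonempty s) with hν
    have hxv : ∀ w : ↥((↑(trFormula φ).freeVarFinset : Set (V Sg))), xs w = R.asgn ν w.1 := by
      rintro ⟨⟨s, n⟩, hw⟩
      have h : (⟨s, n⟩ : V Sg) ∈ (trFormula φ).freeVarFinset := Finset.mem_coe.1 hw
      show xs _ = R.e s (ν s n)
      rw [hν]
      simp only [dif_pos h]
      exact ((hchoice s n h).choose_spec).symm
    rw [key xs (R.asgn ν) hxv]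
    exact (realize_trFormula R φ ν).2 (hsat ν)

end Clos

/-- A one-sorted structure sufficiently compatible with the signature. -/
structure GoodStr (Sg : MSSignature) (N : Type) [(Lg Sg).Structure N] : Prop where
  ne : ∀ s : Sg.Sorts, ∃ x : N, InSort N s x
  cl : ∀ (f : Sg.Func) (x : Fin (Sg.funcDom f).length → N),
    (∀ i, InSort N ((Sg.funcDom f).get i) (x i)) →
    InSort N (Sg.funcCod f) (Structure.funMap (funcSym f) x)

section GoodSec

/-- The MS-structure extracted from a good one-sorted structure. -/
noncomputable def toMS (h : GoodStr Sg N) : MS.Structure Sg where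
  dom s := {x : N // InSort N s x}
  dom_nonempty s := ⟨⟨(h.ne s).choose, (h.ne s).choose_spec⟩⟩
  interpFunc f args := ⟨Structure.funMap (funcSym f) fun i => (args i).1,
    h.cl f _ fun i => (args i).2⟩
  interpPred P args := Structure.RelMap (predSym P) fun i => (args i).1

noncomputable def repToMS (h : GoodStr Sg N) : Rep (toMS h) N where
  e s a := a.1
  inj s a b hab := Subtype.ext hab
  mem s a := a.2
  surj s x hx := ⟨⟨x, hx⟩, rfl⟩
  mapFun f args := rfl
  mapPred P args := Iff.rfl

/-- Sentence: sort `s` is nonempty. -/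
noncomputable def neS (s : Sg.Sorts) : (Lg Sg).Sentence :=
  oIExs (γ := Unit) (fun _ : Unit => Sum.inr ()) (sortF s (Term.var ()))

theorem models_neS_iff (s : Sg.Sorts) : N ⊨ neS s ↔ ∃ x : N, InSort N s x := by
  rw [Sentence.Realize, neS, realize_oIExs]
  constructor
  · rintro ⟨i, hi⟩
    rw [realize_sortF] at hi
    exact ⟨i (), hi⟩
  · rintro ⟨x, hx⟩
    refine ⟨fun _ => x, ?_⟩
    rw [realize_sortF]
    exact hx

/-- Sentence: the function `f` respects sorts. -/
noncomputable def funS (f : Sg.Func) : (Lg Sg).Sentence :=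
  oIAlls (γ := Fin (Sg.funcDom f).length) Sum.inr
    ((oIInf Finset.univ (fun i : Fin (Sg.funcDom f).length =>
        sortF ((Sg.funcDom f).get i) (Term.var i))).imp
      (sortF (Sg.funcCod f) (Term.func (funcSym f) (fun i => Term.var i))))

theorem models_funS_iff (f : Sg.Func) : N ⊨ funS f ↔
    ∀ (x : Fin (Sg.funcDom f).length → N),
      (∀ i, InSort N ((Sg.funcDom f).get i) (x i)) →
      InSort N (Sg.funcCod f) (Structure.funMap (funcSym f) x) := by
  rw [Sentence.Realize, funS, realize_oIAlls]
  constructor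
  · intro h x hx
    have h1 := h x
    rw [show (fun a => Sum.elim (default : Empty → N) x (Sum.inr a)) = x from rfl,
      Formula.realize_imp] at h1
    have h2 := h1 (by
      rw [frealize_iInf]
      intro b _
      rw [realize_sortF]
      exact hx b)
    rw [realize_sortF] at h2
    exact h2
  · intro h x
    rw [show (fun a => Sum.elim (default : Empty → N) x (Sum.inr a)) = x from rfl,
      Formula.realize_imp, frealize_iInf]
    intro hg
    rw [realize_sortF]
    exact h x (fun i => by
      have h3 := hg i (Finset.mem_univ i)
      rw [realize_sortF] at h3
      exact h3)

/-- Sentence: there are at least `n` elements of sort `s`. -/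
noncomputable def atLeast (s : Sg.Sorts) (n : ℕ) : (Lg Sg).Sentence :=
  oIExs (γ := Fin n) Sum.inr
    (oIInf Finset.univ (fun p : Fin n × Fin n =>
      if p.1 = p.2 then sortF s (Term.var p.1)
      else Formula.not ((Term.var p.1).equal (Term.var p.2))))

theorem models_atLeast_iff (s : Sg.Sorts) (n : ℕ) :
    N ⊨ atLeast s n ↔
      ∃ x : Fin n → N, Function.Injective x ∧ ∀ i, InSort N s (x i) := by
  rw [Sentence.Realize, atLeast, realize_oIExs]
  constructor
  · rintro ⟨x, hx⟩
    rw [show (fun a => Sum.elim (default : Empty → N) x (Sum.inr a)) = x from rfl,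
      frealize_iInf] at hx
    refine ⟨x, ?_, ?_⟩
    · intro i j hij
      by_contra hne
      have h1 := hx (i, j) (Finset.mem_univ _)
      rw [if_neg hne, Formula.realize_not, Formula.realize_equal] at h1
      exact h1 hij
    · intro i
      have h1 := hx (i, i) (Finset.mem_univ _)
      rw [if_pos rfl, realize_sortF] at h1
      exact h1
  · rintro ⟨x, hinj, hmem⟩
    refine ⟨x, ?_⟩
    rw [show (fun a => Sum.elim (default : Empty → N) x (Sum.inr a)) = x from rfl,
      frealize_iInf]
    rintro ⟨i, j⟩ _
    by_cases hij : i = j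
    · rw [if_pos hij, realize_sortF]
      exact hmem i
    · rw [if_neg hij, Formula.realize_not, Formula.realize_equal]
      intro hc
      exact hij (hinj hc)

theorem models_atLeast_iff_card (s : Sg.Sorts) (n : ℕ) :
    N ⊨ atLeast s n ↔ (n : Cardinal) ≤ #{x : N // InSort N s x} := by
  rw [models_atLeast_iff]
  have : (n : Cardinal) = #(Fin n) := by simp
  rw [this, Cardinal.le_def]
  constructor
  · rintro ⟨x, hinj, hmem⟩
    exact ⟨⟨fun i => ⟨x i, hmem i⟩, fun i j hij => hinj (congrArg Subtype.val hij)⟩⟩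
  · rintro ⟨emb⟩
    exact ⟨fun i => (emb i).1, fun i j hij => emb.injective (Subtype.ext hij),
      fun i => (emb i).2⟩

end GoodSec

section SigmaStr

variable (A : MS.Structure Sg)

/-- The disjoint union of the sorts of an MS-structure. -/
abbrev SigA : Type := (s : Sg.Sorts) × A.dom s

open Classical in
noncomputable def sigFun {n : ℕ} (f : (Lg Sg).Functions n) (x : Fin n → SigA A) : SigA A :=
  if h : ∀ i : Fin (Sg.funcDom f.1).length, (x (Fin.cast f.2 i)).1 = (Sg.funcDom f.1).get i
  then ⟨Sg.funcCod f.1, A.interpFunc f.1 fun i => (h i) ▸ (x (Fin.cast f.2 i)).2⟩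
  else ⟨Sg.funcCod f.1, Classical.choice (A.dom_nonempty _)⟩

def sigRel {n : ℕ} (R : (Lg Sg).Relations n) (x : Fin n → SigA A) : Prop :=
  match R with
  | Sum.inl P =>
      ∃ h : ∀ i : Fin (Sg.predDom P.1).length,
          (x (Fin.cast P.2 i)).1 = (Sg.predDom P.1).get i,
        A.interpPred P.1 fun i => (h i) ▸ (x (Fin.cast P.2 i)).2
  | Sum.inr s => ∀ i, (x i).1 = s

noncomputable instance instSigA : (Lg Sg).Structure (SigA A) where
  funMap := sigFun A
  RelMap := sigRel A

theorem inSort_sigA (s : Sg.Sorts) (x : SigA A) : InSort (SigA A) s x ↔ x.1 = s := by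
  constructor
  · intro h
    have := h 0
    exact this
  · intro h i
    rw [Subsingleton.elim i (0 : Fin 1)]
    exact h

noncomputable def repA : Rep A (SigA A) where
  e s a := ⟨s, a⟩
  inj s a b hab := by
    have := (Sigma.mk.inj_iff.1 hab).2
    exact eq_of_heq this
  mem s a := by
    rw [inSort_sigA]
  surj s x hx := by
    rw [inSort_sigA] at hx
    obtain ⟨s', a⟩ := x
    cases hx
    exact ⟨a, rfl⟩
  mapFun f args := by
    show _ = sigFun A (funcSym f) (fun i => ⟨(Sg.funcDom f).get i, args i⟩)
    unfold sigFun
    have hp : ∀ i : Fin (Sg.funcDom (funcSym (Sg := Sg) f).1).length,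
        (((fun i => (⟨(Sg.funcDom f).get i, args i⟩ : SigA A))
          (Fin.cast (funcSym (Sg := Sg) f).2 i)).1 =
            (Sg.funcDom (funcSym (Sg := Sg) f).1).get i) :=
      fun i => rfl
    rw [dif_pos hp]
    rfl
  mapPred P args := by
    show _ ↔ sigRel A (predSym P) _
    unfold sigRel
    constructor
    · intro h
      exact ⟨fun i => rfl, h⟩
    · rintro ⟨h, hp⟩
      exact hp

theorem goodA : GoodStr Sg (SigA A) := by
  constructor
  · intro s
    refine ⟨⟨s, Classical.choice (A.dom_nonempty s)⟩, ?_⟩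
    rw [inSort_sigA]
  · intro f x _
    rw [inSort_sigA]
    show (sigFun A (funcSym f) x).1 = _
    unfold sigFun
    split <;> rfl

end SigmaStr

section Cards

theorem card_Lg_le {κ : Cardinal} (h : max Sg.card ℵ₀ ≤ κ) : (Lg Sg).card ≤ κ := by
  have hℵ : ℵ₀ ≤ κ := le_trans (le_max_right _ _) h
  have hS : #Sg.Sorts ≤ κ := by
    refine le_trans ?_ (le_trans (le_max_left _ _) h)
    unfold MSSignature.card
    exact le_trans (self_le_add_right _ _) (self_le_add_right _ _)
  have hF : #Sg.Func ≤ κ := by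
    refine le_trans ?_ (le_trans (le_max_left _ _) h)
    unfold MSSignature.card
    exact le_trans (self_le_add_left _ _) (self_le_add_right _ _)
  have hP : #Sg.Pred ≤ κ := by
    refine le_trans ?_ (le_trans (le_max_left _ _) h)
    unfold MSSignature.card
    exact self_le_add_left _ _
  have emb : (Lg Sg).Symbols ↪ Sg.Func ⊕ (ℕ × (Sg.Pred ⊕ Sg.Sorts)) := by
    refine ⟨fun x => match x with
      | Sum.inl ⟨l, f⟩ => Sum.inl f.1
      | Sum.inr ⟨l, Sum.inl P⟩ => Sum.inr (l, Sum.inl P.1)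
      | Sum.inr ⟨l, Sum.inr s⟩ => Sum.inr (l, Sum.inr s), ?_⟩
    rintro x y hx
    rcases x with (⟨l, f, hf⟩ | ⟨l, (⟨P, hP'⟩ | s)⟩) <;>
      rcases y with (⟨l', f', hf'⟩ | ⟨l', (⟨P', hP''⟩ | s')⟩) <;>
      simp only [Sum.inl.injEq, Sum.inr.injEq, Prod.mk.injEq, reduceCtorEq, false_and,
        and_false] at hx
    · obtain rfl : f = f' := hx
      obtain rfl : l = l' := by rw [← hf, ← hf']
      rfl
    · obtain ⟨rfl, rfl⟩ := hx
      rfl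
    · obtain ⟨rfl, rfl⟩ := hx
      rfl
  have h1 : (Lg Sg).card ≤ #(Sg.Func ⊕ (ℕ × (Sg.Pred ⊕ Sg.Sorts))) :=
    Cardinal.mk_le_of_injective emb.injective
  refine le_trans h1 ?_
  rw [Cardinal.mk_sum, Cardinal.mk_prod, Cardinal.mk_sum]
  simp only [Cardinal.lift_id, Cardinal.mk_denumerable]
  have h2 : #Sg.Pred + #Sg.Sorts ≤ κ := Cardinal.add_le_of_le hℵ hP hS
  have h3 : ℵ₀ * (#Sg.Pred + #Sg.Sorts) ≤ κ :=
    le_trans (Cardinal.mul_le_max _ _) (by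
      simp only [max_le_iff]
      exact ⟨⟨hℵ, h2⟩, hℵ⟩)
  exact Cardinal.add_le_of_le hℵ hF h3

theorem mk_fiber (A : MS.Structure Sg) (s : Sg.Sorts) :
    #{x : SigA A // InSort (SigA A) s x} = #(A.dom s) := by
  refine Cardinal.mk_congr ⟨fun x => cast (congrArg A.dom ((inSort_sigA A s x.1).1 x.2)) x.1.2,
    fun a => ⟨⟨s, a⟩, (inSort_sigA A s _).2 rfl⟩, ?_, ?_⟩
  · rintro ⟨⟨s', a⟩, hx⟩
    have h : s' = s := (inSort_sigA A s _).1 hx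
    subst h
    rfl
  · intro a
    rfl

end Cards

section Compact

variable (A : MS.Structure Sg) (κ : Cardinal)

/-- Index type for new constants: one for each element of `κ.out`, for each
infinite sort. -/
abbrev CIdx : Type := {s : Sg.Sorts // Infinite (A.dom s)} × κ.out

/-- The axiom that constant `p` has its designated sort. -/
noncomputable def sortAxSent (p : CIdx A κ) : ((Lg Sg)[[CIdx A κ]]).Sentence :=
  Relations.formula (((Lg Sg).lhomWithConstants (CIdx A κ)).onRelation (sortSym p.1.1))
    ![((Lg Sg).con p).term]

/-- The big theory: the complete theory of `SigA A`, sort axioms for the new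
constants, and pairwise distinctness of the new constants. -/
noncomputable def BigT : ((Lg Sg)[[CIdx A κ]]).Theory :=
  (((Lg Sg).lhomWithConstants (CIdx A κ)).onTheory ((Lg Sg).completeTheory (SigA A)) ∪
    Set.range (sortAxSent A κ)) ∪
    (Lg Sg).distinctConstantsTheory (Set.univ : Set (CIdx A κ))

theorem models_sortAxSent {M : Type} [((Lg Sg)[[CIdx A κ]]).Structure M] (p : CIdx A κ) :
    M ⊨ sortAxSent A κ p ↔
      Structure.RelMap (((Lg Sg).lhomWithConstants (CIdx A κ)).onRelation (sortSym p.1.1))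
        ![((Lg Sg).con p : M)] := by
  rw [Sentence.Realize, sortAxSent, Formula.realize_rel]
  have : (fun i : Fin 1 => Term.realize (default : Empty → M) (![((Lg Sg).con p).term] i)) =
      ![((Lg Sg).con p : M)] := by
    funext i
    rw [Subsingleton.elim i 0]
    simp [Term.realize_constants]
  rw [this]

theorem distinct_univ_eq_iUnion {L : FirstOrder.Language} {α : Type} :
    L.distinctConstantsTheory (Set.univ : Set α) =
      ⋃ t : Finset α, L.distinctConstantsTheory (↑t : Set α) := by
  classical
  apply subset_antisymm
  · rintro φ hφ
    obtain ⟨⟨a, b⟩, ⟨-, hab⟩, rfl⟩ := hφ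
    refine Set.mem_iUnion.2 ⟨{a, b}, Set.mem_image_of_mem _ ⟨⟨?_, ?_⟩, hab⟩⟩
    · simp
    · simp
  · exact Set.iUnion_subset fun t =>
      distinctConstantsTheory_mono (Set.subset_univ _)

theorem bigT_isSatisfiable (hne : Nonempty (SigA A)) : (BigT A κ).IsSatisfiable := by
  classical
  rw [BigT, distinct_univ_eq_iUnion, Set.union_iUnion]
  rw [Theory.isSatisfiable_directed_union_iff (Monotone.directed_le (fun t t' htt' =>
    Set.union_subset_union_right _
      (distinctConstantsTheory_mono (Finset.coe_subset.2 htt'))))]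
  intro t
  -- build an interpretation of the constants in `SigA A`
  have hG : ∀ p : {s : Sg.Sorts // Infinite (A.dom s)},
      ∃ G : κ.out → A.dom p.1, Set.InjOn G {i | i ∈ t.image Prod.snd} := by
    intro p
    haveI := p.2
    have e : {x // x ∈ t.image Prod.snd} ↪ A.dom p.1 :=
      (Fintype.equivFin _).toEmbedding.trans
        (Fin.valEmbedding.trans (Infinite.natEmbedding _))
    refine ⟨fun i => if h : i ∈ t.image Prod.snd then e ⟨i, h⟩
      else Classical.choice (A.dom_nonempty p.1), ?_⟩
    intro i hi j hj hij
    simp only [Set.mem_setOf_eq] at hi hj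
    simp only [dif_pos hi, dif_pos hj] at hij
    exact congrArg Subtype.val (e.injective hij)
  choose G hGinj using hG
  set gmap : CIdx A κ → SigA A := fun p => ⟨p.1.1, G p.1 p.2⟩ with hgmap
  letI : (constantsOn (CIdx A κ)).Structure (SigA A) := constantsOn.structure gmap
  have hcon : ∀ p : CIdx A κ, ((Lg Sg).con p : SigA A) = gmap p := fun _ => rfl
  have hmodel : SigA A ⊨
      (((Lg Sg).lhomWithConstants (CIdx A κ)).onTheory
        ((Lg Sg).completeTheory (SigA A)) ∪ Set.range (sortAxSent A κ)) ∪
      (Lg Sg).distinctConstantsTheory (↑t : Set (CIdx A κ)) := by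
    refine Theory.Model.union (Theory.Model.union ?_ ?_) ?_
    · exact (LHom.onTheory_model _ _).2 inferInstance
    · rw [Theory.model_iff]
      rintro φ ⟨p, rfl⟩
      rw [models_sortAxSent]
      intro i
      rw [Subsingleton.elim i (0 : Fin 1)]
      rfl
    · rw [model_distinctConstantsTheory]
      intro p hp q hq hpq
      have hpq' : gmap p = gmap q := hpq
      obtain ⟨h1, h2⟩ := Sigma.mk.inj_iff.1 hpq'
      have hps : p.1 = q.1 := Subtype.ext h1
      obtain ⟨⟨ps, hips⟩, pi⟩ := p
      obtain ⟨⟨qs, hiqs⟩, qi⟩ := q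
      cases hps
      rw [heq_iff_eq] at h2
      have : pi = qi := hGinj _ (Finset.mem_image_of_mem Prod.snd hp)
        (Finset.mem_image_of_mem Prod.snd hq) h2
      rw [this]
  haveI := hne
  exact Theory.Model.isSatisfiable (SigA A)

end Compact

section Main

theorem main (A : MS.Structure Sg) (κ : Cardinal) (hsig : max Sg.card ℵ₀ ≤ κ)
    (s₀ : Sg.Sorts) (hs₀ : Infinite (A.dom s₀)) :
    ∃ B : MS.Structure Sg, MS.ElemEquiv A B ∧
      (∀ s : Sg.Sorts, Infinite (A.dom s) → #(B.dom s) = κ) ∧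
      (∀ s : Sg.Sorts, Finite (A.dom s) → #(B.dom s) = #(A.dom s)) := by
  classical
  have hℵ : ℵ₀ ≤ κ := le_trans (le_max_right _ _) hsig
  haveI hne : Nonempty (SigA A) := ⟨⟨s₀, Classical.choice (A.dom_nonempty s₀)⟩⟩
  obtain ⟨NM⟩ := bigT_isSatisfiable A κ hne
  haveI hNmod : (NM : Type) ⊨ BigT A κ := NM.is_model
  have hNdist : ((NM : Type)) ⊨ (Lg Sg).distinctConstantsTheory (Set.univ : Set (CIdx A κ)) :=
    hNmod.mono Set.subset_union_right
  have hNinj : Set.InjOn (fun p : CIdx A κ => ((Lg Sg).con p : (NM : Type)))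
      Set.univ := (model_distinctConstantsTheory _ _).1 hNdist
  -- κ ≤ #N
  have hκN : κ ≤ #(NM : Type) := by
    refine (Cardinal.mk_out κ).symm.trans_le ?_
    refine Cardinal.mk_le_of_injective (f := fun i : κ.out =>
      ((Lg Sg).con (⟨⟨s₀, hs₀⟩, i⟩ : CIdx A κ) : (NM : Type))) ?_
    intro i j hij
    have := hNinj (Set.mem_univ (⟨⟨s₀, hs₀⟩, i⟩ : CIdx A κ))
      (Set.mem_univ (⟨⟨s₀, hs₀⟩, j⟩ : CIdx A κ)) hij
    exact congrArg Prod.snd this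
  -- language cardinality bound
  have hcard : ((Lg Sg)[[CIdx A κ]]).card ≤ κ := by
    rw [card_withConstants]
    simp only [Cardinal.lift_id]
    refine Cardinal.add_le_of_le hℵ (card_Lg_le hsig) ?_
    have h1 : #(CIdx A κ) = #{s : Sg.Sorts // Infinite (A.dom s)} * κ := by
      rw [Cardinal.mk_prod]
      simp only [Cardinal.lift_id, Cardinal.mk_out]
    rw [h1]
    refine le_trans (Cardinal.mul_le_max _ _) ?_
    simp only [max_le_iff]
    have hS : #Sg.Sorts ≤ κ := by
      refine le_trans ?_ (le_trans (le_max_left _ _) hsig)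
      unfold MSSignature.card
      exact le_trans (self_le_add_right _ _) (self_le_add_right _ _)
    exact ⟨⟨le_trans (Cardinal.mk_subtype_le _) hS, le_refl _⟩, hℵ⟩
  -- downward Löwenheim–Skolem
  obtain ⟨S, -, hScard⟩ := exists_elementarySubstructure_card_eq
    ((Lg Sg)[[CIdx A κ]]) (∅ : Set (NM : Type)) κ hℵ
    (by simp) (by simpa using hcard) (by simpa using hκN)
  rw [Cardinal.lift_id, Cardinal.lift_id] at hScard
  haveI hSmod : (S : Type) ⊨ BigT A κ := inferInstance
  letI LSstr : (Lg Sg).Structure (S : Type) :=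
    ((Lg Sg).lhomWithConstants (CIdx A κ)).reduct (S : Type)
  haveI : ((Lg Sg).lhomWithConstants (CIdx A κ)).IsExpansionOn (S : Type) :=
    LHom.isExpansionOn_reduct _ _
  have hSth : (S : Type) ⊨ (Lg Sg).completeTheory (SigA A) :=
    (LHom.onTheory_model _ _).1
      (hSmod.mono (le_trans Set.subset_union_left Set.subset_union_left))
  have htrans : ∀ σ : (Lg Sg).Sentence, (SigA A ⊨ σ) ↔ ((S : Type) ⊨ σ) := by
    intro σ
    constructor
    · intro h
      haveI := hSth
      exact Theory.realize_sentence_of_mem ((Lg Sg).completeTheory (SigA A))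
        (mem_completeTheory.2 h)
    · intro h
      by_contra hc
      have h1 : SigA A ⊨ σ.not := by
        rw [Sentence.Realize, Formula.realize_not]
        exact hc
      haveI := hSth
      have h2 : (S : Type) ⊨ σ.not :=
        Theory.realize_sentence_of_mem ((Lg Sg).completeTheory (SigA A))
          (mem_completeTheory.2 h1)
      rw [Sentence.Realize, Formula.realize_not] at h2
      exact h2 h
  have goodS : GoodStr Sg (S : Type) := by
    constructor
    · intro s
      exact (models_neS_iff s).1 ((htrans (neS s)).1 ((models_neS_iff s).2 ((goodA A).ne s)))
    · intro f
      exact (models_funS_iff f).1 ((htrans (funS f)).1 ((models_funS_iff f).2 ((goodA A).cl f)))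
  refine ⟨toMS goodS, ?_, ?_, ?_⟩
  · intro φ _
    exact (models_clos_iff (repA A) φ).symm.trans
      ((htrans (clos φ)).trans (models_clos_iff (repToMS goodS) φ))
  · -- infinite sorts
    intro s hs
    show #{x : (S : Type) // InSort (S : Type) s x} = κ
    refine le_antisymm (le_trans (Cardinal.mk_subtype_le _) (le_of_eq hScard)) ?_
    refine (Cardinal.mk_out κ).symm.trans_le ?_
    have hSdist : (S : Type) ⊨ (Lg Sg).distinctConstantsTheory
        (Set.univ : Set (CIdx A κ)) := hSmod.mono Set.subset_union_right
    have hSinj : Set.InjOn (fun p : CIdx A κ => ((Lg Sg).con p : (S : Type)))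
        Set.univ := (model_distinctConstantsTheory _ _).1 hSdist
    have hsort : ∀ i : κ.out, InSort (S : Type) s
        (((Lg Sg).con (⟨⟨s, hs⟩, i⟩ : CIdx A κ) : (S : Type))) := by
      intro i
      have h1 : (S : Type) ⊨ sortAxSent A κ (⟨⟨s, hs⟩, i⟩ : CIdx A κ) := by
        haveI := hSmod
        exact Theory.realize_sentence_of_mem (BigT A κ)
          (Set.mem_union_left _ (Set.mem_union_right _ ⟨_, rfl⟩))
      rw [models_sortAxSent] at h1
      exact h1
    refine Cardinal.mk_le_of_injective (f := fun i : κ.out =>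
      (⟨((Lg Sg).con (⟨⟨s, hs⟩, i⟩ : CIdx A κ) : (S : Type)), hsort i⟩ :
        {x : (S : Type) // InSort (S : Type) s x})) ?_
    intro i j hij
    have h2 := hSinj (Set.mem_univ (⟨⟨s, hs⟩, i⟩ : CIdx A κ))
      (Set.mem_univ (⟨⟨s, hs⟩, j⟩ : CIdx A κ)) (congrArg Subtype.val hij)
    exact congrArg Prod.snd h2
  · -- finite sorts
    intro s hfin
    haveI := hfin
    show #{x : (S : Type) // InSort (S : Type) s x} = #(A.dom s)
    have hAn : ((Nat.card (A.dom s) : ℕ) : Cardinal) = #(A.dom s) := Nat.cast_card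
    set n := Nat.card (A.dom s) with hn
    have h1 : SigA A ⊨ atLeast s n := by
      rw [models_atLeast_iff_card, mk_fiber, ← hAn]
    have h2 : ¬ SigA A ⊨ atLeast s (n + 1) := by
      rw [models_atLeast_iff_card, mk_fiber, ← hAn]
      intro h
      have h5 := Nat.cast_le.1 h
      omega
    have h1' := (htrans (atLeast s n)).1 h1
    have h2' : ¬ (S : Type) ⊨ atLeast s (n + 1) := fun h => h2 ((htrans _).2 h)
    rw [models_atLeast_iff_card] at h1'
    rw [models_atLeast_iff_card] at h2'
    rw [← hAn]
    refine le_antisymm ?_ h1'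
    have h3 : #{x : (S : Type) // InSort (S : Type) s x} < ((n + 1 : ℕ) : Cardinal) :=
      not_le.1 h2'
    have h4 : ((n + 1 : ℕ) : Cardinal) = Order.succ (n : Cardinal) := Cardinal.nat_succ n
    rw [h4] at h3
    exact Order.lt_succ_iff.1 h3

end Main

end MSLS

end MSLS

/-- Combined Löwenheim–Skolem for many-sorted logic: for any `κ ≥ max(|Σ|, ℵ₀)` there
is a structure `𝔹` elementarily equivalent to `𝔸` with `|σ^𝔹| = κ` on every sort
interpreted as infinite in `𝔸`, and `|σ^𝔹| = |σ^𝔸|` on every sort interpreted as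
finite in `𝔸`. -/
theorem many_sorted_combined_LS {Sg : MSSignature} (A : Structure Sg) (κ : Cardinal)
    (hsig : max Sg.card ℵ₀ ≤ κ) :
    ∃ B : Structure Sg, ElemEquiv A B ∧
      (∀ s : Sg.Sorts, Infinite (A.dom s) → #(B.dom s) = κ) ∧
      (∀ s : Sg.Sorts, Finite (A.dom s) → #(B.dom s) = #(A.dom s)) := by
  classical
  by_cases hfin : ∀ s : Sg.Sorts, Finite (A.dom s)
  · refine ⟨A, fun φ _ => Iff.rfl, ?_, fun s _ => rfl⟩
    intro s hs
    haveI := hfin s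
    haveI := hs
    exact (not_finite (A.dom s)).elim
  · push_neg at hfin
    obtain ⟨s₀, hs₀⟩ := hfin
    haveI hs₀' : Infinite (A.dom s₀) := by exact hs₀
    exact MSLS.main A κ hsig s₀ hs₀'
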